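/- Before-flag characterization of the decider: fix an assignment under which exactly l of B_j,...,B_{N−1} are true, suppose l + c = k and j ≤ i. Then the value of DecExt^j_{c,0} equals (if B_i is false then A else C); i.e., DecExt^j_{c,0} correctly behaves as the decision (A ⟨B_i⟩ C). -/

import Mathlib

/-- The decider nodes `DecExt^j_{c,b}` built from the Boolean values `B_0, …, B_{N-1}`,
with distinguished index `i`, target count `k`, and output values `A` (flag 0) and `C`
(flag 1):
`DecExt^j_{c,b} = DecExt^{j+1}_{c,b} ∨ (B_j ∧ DecExt^{j+1}_{c+1,b})` for `j < N`, `j ≠ i`;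
`DecExt^i_{c,0} = DecExt^{i+1}_{c,0} ∨ (B_i ∧ DecExt^{i+1}_{c+1,1})`;
`DecExt^N_{k,0} = A`, `DecExt^N_{k,1} = C`, `DecExt^N_{c,b} = 0` for `c ≠ k`. -/
def decExt (N i : ℕ) (k : ℤ) (A C : Bool) (B : ℕ → Bool) (j : ℕ) (c : ℤ) (b : Bool) : Bool :=
  if _h : j < N then
    if j = i ∧ b = false then
      decExt N i k A C B (j + 1) c false || (B i && decExt N i k A C B (j + 1) (c + 1) true)
    else
      decExt N i k A C B (j + 1) c b || (B j && decExt N i k A C B (j + 1) (c + 1) b)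
  else if c = k then (if b then C else A) else false
termination_by N - j
decreasing_by all_goals omega

/-- The number of true values among `B_j, …, B_{N-1}`. -/
def cnt (N : ℕ) (B : ℕ → Bool) (j : ℕ) : ℕ :=
  ((Finset.Ico j N).filter fun m => B m = true).card


lemma cnt_ge (N : ℕ) (B : ℕ → Bool) (j : ℕ) (h : N ≤ j) : cnt N B j = 0 := by
  unfold cnt
  rw [Finset.Ico_eq_empty (by omega)]
  simp

lemma cnt_succ (N : ℕ) (B : ℕ → Bool) (j : ℕ) (h : j < N) :
    cnt N B j = (if B j then 1 else 0) + cnt N B (j + 1) := by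
  unfold cnt
  rw [← Finset.insert_Ico_add_one_left_eq_Ico h, Finset.filter_insert]
  split
  · rw [Finset.card_insert_of_notMem (by simp)]
    omega
  · omega

lemma dec_small (N i : ℕ) (k : ℤ) (A C : Bool) (B : ℕ → Bool) :
    ∀ d j (c : ℤ) (b : Bool), N ≤ j + d → c + (cnt N B j : ℤ) < k →
      decExt N i k A C B j c b = false := by
  intro d
  induction d with
  | zero =>
    intro j c b hd hc
    have h0 := cnt_ge N B j (by omega)
    rw [decExt, dif_neg (by omega), if_neg (by omega)]
  | succ d ih =>
    intro j c b hd hc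
    by_cases hjN : j < N
    · have hcnt := cnt_succ N B j hjN
      have h1 := ih (j + 1) c b (by omega) (by omega)
      rw [decExt, dif_pos hjN]
      cases hB : B j with
      | false =>
        simp [hB] at hcnt
        have h1f := ih (j + 1) c false (by omega) (by omega)
        split
        · rename_i hcond
          obtain ⟨hji, hb⟩ := hcond
          subst hji
          simp [hB, h1f]
        · simp [h1]
      | true =>
        simp [hB] at hcnt
        have h2t := ih (j + 1) (c + 1) true (by omega) (by omega)
        have h2b := ih (j + 1) (c + 1) b (by omega) (by omega)
        have h1f := ih (j + 1) c false (by omega) (by omega)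
        split
        · simp [h1f, h2t]
        · simp [h1, h2b]
    · have h0 := cnt_ge N B j (by omega)
      rw [decExt, dif_neg (by omega), if_neg (by omega)]

lemma dec_after (N i : ℕ) (k : ℤ) (A C : Bool) (B : ℕ → Bool) :
    ∀ d j (c : ℤ) (b : Bool), N ≤ j + d → i < j → c + (cnt N B j : ℤ) = k →
      decExt N i k A C B j c b = (if b then C else A) := by
  intro d
  induction d with
  | zero =>
    intro j c b hd hij hc
    have h0 := cnt_ge N B j (by omega)
    rw [decExt, dif_neg (by omega), if_pos (by omega)]
  | succ d ih =>
    intro j c b hd hij hc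
    by_cases hjN : j < N
    · have hcnt := cnt_succ N B j hjN
      rw [decExt, dif_pos hjN, if_neg (by rintro ⟨h, -⟩; omega)]
      cases hB : B j with
      | false =>
        simp [hB] at hcnt
        rw [ih (j + 1) c b (by omega) (by omega) (by omega)]
        simp [hB]
      | true =>
        simp [hB] at hcnt
        rw [ih (j + 1) (c + 1) b (by omega) (by omega) (by omega),
            dec_small N i k A C B N (j + 1) c b (by omega) (by omega)]
        simp [hB]
    · have h0 := cnt_ge N B j (by omega)
      rw [decExt, dif_neg (by omega), if_pos (by omega)]

lemma dec_at_i (N i : ℕ) (hi : i < N) (k : ℤ) (A C : Bool) (B : ℕ → Bool) (c : ℤ)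
    (hc : c + (cnt N B i : ℤ) = k) :
    decExt N i k A C B i c false = if B i then C else A := by
  have hcnt := cnt_succ N B i hi
  rw [decExt, dif_pos hi, if_pos ⟨rfl, rfl⟩]
  cases hB : B i with
  | false =>
    simp [hB] at hcnt
    rw [dec_after N i k A C B N (i + 1) c false (by omega) (by omega) (by omega)]
    simp [hB]
  | true =>
    simp [hB] at hcnt
    rw [dec_after N i k A C B N (i + 1) (c + 1) true (by omega) (by omega) (by omega),
        dec_small N i k A C B N (i + 1) c false (by omega) (by omega)]
    simp [hB]

/-- Before-flag characterization of the decider: if exactly `l` of `B_j, …, B_{N-1}` are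
true, `l + c = k` and `j ≤ i`, then `DecExt^j_{c,0}` evaluates to the decision
`(A ⟨B_i⟩ C)`, i.e. to `A` if `B_i` is false and to `C` if `B_i` is true. -/
theorem decider_before_flag (N i : ℕ) (hi : i < N) (k : ℤ) (A C : Bool) (B : ℕ → Bool)
    (j : ℕ) (hji : j ≤ i) (l c : ℤ)
    (hl : (cnt N B j : ℤ) = l) (hlc : l + c = k) :
    decExt N i k A C B j c false = if B i then C else A := by
  have key : ∀ d j (c : ℤ), i ≤ j + d → j ≤ i → c + (cnt N B j : ℤ) = k →
      decExt N i k A C B j c false = if B i then C else A := by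
    intro d
    induction d with
    | zero =>
      intro j c h1 h2 hc
      have hji' : j = i := by omega
      subst hji'
      exact dec_at_i N j hi k A C B c hc
    | succ d ih =>
      intro j c h1 h2 hc
      by_cases hje : j = i
      · subst hje
        exact dec_at_i N j hi k A C B c hc
      · have hjN : j < N := by omega
        have hcnt := cnt_succ N B j hjN
        rw [decExt, dif_pos hjN, if_neg (by rintro ⟨h, -⟩; omega)]
        cases hB : B j with
        | false =>
          simp [hB] at hcnt
          rw [ih (j + 1) c (by omega) (by omega) (by omega)]
          simp [hB]
        | true =>
          simp [hB] at hcnt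
          rw [ih (j + 1) (c + 1) (by omega) (by omega) (by omega),
              dec_small N i k A C B N (j + 1) c false (by omega) (by omega)]
          simp [hB]
  exact key i j c (by omega) hji (by omega)
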